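/- Let n > 1, let G be a profinite group, and let χ₁, χ₂ : G → ℤ/nℤ be continuous homomorphisms. If φ : G → D̄_n is the continuous homomorphism given by φ(g) = (χ₁(g), χ₂(g)) under the identification D̄_n ≅ ℤ/nℤ × ℤ/nℤ, then the connecting class δφ ∈ H²(G, ℤ/nℤ) of the central extension 1 → ℤ/nℤ → D_n → D̄_n → 1 equals the cup product class [χ₁ ∪ χ₂], where (χ₁ ∪ χ₂)(g₁, g₂) = χ₁(g₁)·χ₂(g₂). Equivalently, for any set-theoretic lift φ̃ of φ to D_n with third-entry cochain α ∈ C¹(G, ℤ/nℤ), the 2-cocycle (g₁,g₂) ↦ φ̃(g₁)φ̃(g₂)φ̃(g₁g₂)⁻¹ ∈ Z equals χ₁ ∪ χ₂ + dα as a function. -/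

import Mathlib

namespace TripleSymbolTest

/-- The Heisenberg group `D_n` of upper unitriangular `3 × 3` matrices over `ℤ/nℤ`:
an element `(a, b, c)` stands for the matrix `![![1, a, b], ![0, 1, c], ![0, 0, 1]]`. -/
def Heis (n : ℕ) : Type := ZMod n × ZMod n × ZMod n

namespace Heis
variable {n : ℕ}

instance : Mul (Heis n) :=
  ⟨fun x y => (x.1 + y.1, x.2.1 + y.2.1 + x.1 * y.2.2, x.2.2 + y.2.2)⟩
instance : One (Heis n) := ⟨((0 : ZMod n), (0 : ZMod n), (0 : ZMod n))⟩
instance : Inv (Heis n) := ⟨fun x => (-x.1, x.1 * x.2.2 - x.2.1, -x.2.2)⟩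

@[simp] theorem mul_def (x y : Heis n) :
    x * y = (x.1 + y.1, x.2.1 + y.2.1 + x.1 * y.2.2, x.2.2 + y.2.2) := rfl
@[simp] theorem inv_def (x : Heis n) :
    x⁻¹ = (-x.1, x.1 * x.2.2 - x.2.1, -x.2.2) := rfl
@[simp] theorem one_def : (1 : Heis n) = ((0 : ZMod n), (0 : ZMod n), (0 : ZMod n)) := rfl

instance : Group (Heis n) where
  mul := (· * ·)
  one := 1
  inv := (·⁻¹)
  mul_assoc x y z := by
    rw [mul_def (x * y), mul_def x (y * z), mul_def x y, mul_def y z]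
    refine Prod.ext ?_ (Prod.ext ?_ ?_) <;> dsimp <;> ring
  one_mul x := by
    rw [mul_def, one_def]
    refine Prod.ext ?_ (Prod.ext ?_ ?_) <;> dsimp <;> ring
  mul_one x := by
    rw [mul_def, one_def]
    refine Prod.ext ?_ (Prod.ext ?_ ?_) <;> dsimp <;> ring
  inv_mul_cancel x := by
    rw [mul_def, inv_def, one_def]
    refine Prod.ext ?_ (Prod.ext ?_ ?_) <;> dsimp <;> ring

/-- The projection `D_n → D̄_n = D_n/Z`, where `D̄_n` is identified with
`ℤ/nℤ × ℤ/nℤ` (written additively) via `(a, c)`. -/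
def proj (x : Heis n) : ZMod n × ZMod n := (x.1, x.2.2)

/-- The projection is a homomorphism onto `D̄_n ≅ ℤ/nℤ × ℤ/nℤ`. -/
theorem proj_mul (x y : Heis n) : proj (x * y) = proj x + proj y := rfl

/-- The kernel of the projection `D_n → D̄_n` is exactly the center `Z` of `D_n`,
which is identified with `ℤ/nℤ` via the `b`-entry; thus
`1 → ℤ/nℤ → D_n → D̄_n → 1` is a central extension. -/
theorem proj_eq_zero_iff_center (x : Heis n) :
    proj x = 0 ↔ x ∈ Subgroup.center (Heis n) := by
  constructor
  · intro h
    have h1 : x.1 = 0 := congrArg Prod.fst h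
    have h2 : x.2.2 = 0 := congrArg (fun p => p.2) h
    rw [Subgroup.mem_center_iff]
    intro y
    simp only [mul_def, h1, h2]
    refine Prod.ext ?_ (Prod.ext ?_ ?_) <;> dsimp <;> ring
  · intro h
    rw [Subgroup.mem_center_iff] at h
    have hy := congrArg (fun p : Heis n => p.2.1)
      (h ((0 : ZMod n), (0 : ZMod n), (1 : ZMod n)))
    have hz := congrArg (fun p : Heis n => p.2.1)
      (h ((1 : ZMod n), (0 : ZMod n), (0 : ZMod n)))
    erw [mul_def, mul_def] at hy
    erw [mul_def, mul_def] at hz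
    dsimp only at hy hz
    have h1 : x.1 = 0 := by linear_combination - hy
    have h2 : x.2.2 = 0 := by linear_combination hz
    exact Prod.ext h1 h2

end Heis

/-- Lemma 2 of the paper and its proof.  Let `n > 1`, let `G` be a
profinite group and `χ₁, χ₂ : G → ℤ/nℤ` continuous homomorphisms, and let
`φ : G → D̄_n ≅ ℤ/nℤ × ℤ/nℤ` be `φ(g) = (χ₁(g), χ₂(g))`.  Then for any set-theoretic lift
`φ̃ : G → D_n` of `φ` with third-entry (`b`-entry) cochain `α ∈ C¹(G, ℤ/nℤ)`, the
`2`-cocycle `(g₁,g₂) ↦ φ̃(g₁)φ̃(g₂)φ̃(g₁g₂)⁻¹ ∈ Z ≅ ℤ/nℤ` representing the connecting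
class `δφ` equals `χ₁ ∪ χ₂ + dα` as a function, where
`(χ₁ ∪ χ₂)(g₁,g₂) = χ₁(g₁)·χ₂(g₂)`; in particular `δφ = [χ₁ ∪ χ₂]` in `H²(G, ℤ/nℤ)`. -/
theorem statement1 (n : ℕ) (hn : 1 < n)
    (G : Type*) [Group G] [TopologicalSpace G] [IsTopologicalGroup G]
    [CompactSpace G] [T2Space G] [TotallyDisconnectedSpace G]
    (χ₁ χ₂ : G → ZMod n)
    (hχ₁ : ∀ g h, χ₁ (g * h) = χ₁ g + χ₁ h) (hχ₂ : ∀ g h, χ₂ (g * h) = χ₂ g + χ₂ h)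
    (hc₁ : IsLocallyConstant χ₁) (hc₂ : IsLocallyConstant χ₂)
    (φ : G → ZMod n × ZMod n) (hφ : ∀ g, φ g = (χ₁ g, χ₂ g))
    (φt : G → Heis n) (hlift : ∀ g, Heis.proj (φt g) = φ g)
    (α : G → ZMod n) (hα : ∀ g, α g = (φt g).2.1) :
    ∀ g₁ g₂ : G, (φt g₁ * φt g₂ * (φt (g₁ * g₂))⁻¹).2.1
      = χ₁ g₁ * χ₂ g₂ + (α g₂ - α (g₁ * g₂) + α g₁) := by
  intro g₁ g₂
  have h1 : ∀ g, (φt g).1 = χ₁ g := fun g => by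
    have := congrArg Prod.fst (hlift g); rw [hφ] at this; exact this
  have h2 : ∀ g, (φt g).2.2 = χ₂ g := fun g => by
    have := congrArg Prod.snd (hlift g); rw [hφ] at this; exact this
  simp only [Heis.mul_def, Heis.inv_def, hα, h1, h2, hχ₁, hχ₂]
  erw [Heis.mul_def]
  dsimp only
  ring


end TripleSymbolTest
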